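/- Let K = {f ∈ ℂ((t)) : there exists C > 0 such that |coeff_k(f)| ≤ C^k · k! for all integers k ≥ 1}. Then for every nonzero f ∈ K, the inverse f⁻¹ in the field ℂ((t)) again belongs to K. Hence K is a subfield of ℂ((t)). -/

import Mathlib

open Finset PowerSeries

lemma fact_aux1 (k e : ℕ) : (k+e).factorial ≤ (k+e)^e * k.factorial := by
  induction e with
  | zero => simp
  | succ e ih =>
    have h1 : (k+(e+1)).factorial = (k+e+1) * (k+e).factorial := by
      rw [show k+(e+1) = (k+e)+1 by ring, Nat.factorial_succ]
    rw [h1]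
    calc (k+e+1) * (k+e).factorial ≤ (k+e+1) * ((k+e)^e * k.factorial) :=
          Nat.mul_le_mul_left _ ih
      _ ≤ (k+e+1) * ((k+e+1)^e * k.factorial) :=
          Nat.mul_le_mul_left _ (Nat.mul_le_mul_right _ (Nat.pow_le_pow_left (by omega) e))
      _ = (k+(e+1))^(e+1) * k.factorial := by
          rw [show k+(e+1) = k+e+1 by ring, pow_succ]; ring

lemma fact_aux2 (e k : ℕ) (hk : 1 ≤ k) :
    (k+e).factorial ≤ (e+1)^e * (2^e)^k * k.factorial := by
  calc (k+e).factorial ≤ (k+e)^e * k.factorial := fact_aux1 k e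
    _ ≤ ((e+1)*k)^e * k.factorial := by
        refine Nat.mul_le_mul_right _ (Nat.pow_le_pow_left ?_ e)
        nlinarith
    _ = (e+1)^e * k^e * k.factorial := by rw [mul_pow]
    _ ≤ (e+1)^e * (2^e)^k * k.factorial := by
        refine Nat.mul_le_mul_right _ (Nat.mul_le_mul_left _ ?_)
        calc k^e ≤ (2^k)^e := Nat.pow_le_pow_left (Nat.le_of_lt (Nat.lt_two_pow_self (n := k))) e
          _ = (2^e)^k := by rw [← pow_mul, ← pow_mul, Nat.mul_comm]

lemma shift_bound {D E : ℝ} (hD : 1 ≤ D) (hE : 1 ≤ E) (e : ℕ) :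
    ∃ C : ℝ, 0 < C ∧ ∀ n k : ℕ, 1 ≤ k → n ≤ k + e →
      D * E^n * n.factorial ≤ C^k * k.factorial := by
  refine ⟨(D * E^e * (e+1)^e) * (E * 2^e), by positivity, fun n k hk hn => ?_⟩
  have hE0 : (0:ℝ) < E := lt_of_lt_of_le one_pos hE
  have hD0 : (0:ℝ) ≤ D := by linarith
  have h1 : D * E^n * n.factorial ≤ D * E^(k+e) * (k+e).factorial := by
    have ha : E ^ n ≤ E ^ (k+e) := pow_le_pow_right₀ hE hn
    have hf : (n.factorial : ℝ) ≤ (k+e).factorial := by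
      exact_mod_cast Nat.factorial_le (by omega)
    have hb : D * E ^ n ≤ D * E ^ (k+e) := by
      exact mul_le_mul_of_nonneg_left ha hD0
    exact mul_le_mul hb hf (by positivity) (mul_nonneg hD0 (by positivity))
  have h2 : ((k+e).factorial : ℝ) ≤ ((e:ℝ)+1)^e * (2^e)^k * k.factorial := by
    exact_mod_cast fact_aux2 e k hk
  have h3 : D * E^(k+e) * (k+e).factorial ≤ (D * E^e * ((e:ℝ)+1)^e) * ((E * 2^e)^k * k.factorial) := by
    rw [pow_add, mul_pow]
    calc D * (E^k * E^e) * (k+e).factorial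
        ≤ D * (E^k * E^e) * (((e:ℝ)+1)^e * (2^e)^k * k.factorial) := by
          exact mul_le_mul_of_nonneg_left h2 (mul_nonneg hD0 (by positivity))
      _ = (D * E^e * ((e:ℝ)+1)^e) * (E^k * (2^e)^k * k.factorial) := by ring
  have hEe : (1:ℝ) ≤ E^e := one_le_pow₀ hE
  have hee : (1:ℝ) ≤ ((e:ℝ)+1)^e := one_le_pow₀ (by linarith [Nat.cast_nonneg (α:=ℝ) e])
  have hb1 : (1:ℝ) ≤ D * E^e := by nlinarith
  have hb : (1:ℝ) ≤ D * E^e * ((e:ℝ)+1)^e := by nlinarith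
  have h4 : (D * E^e * ((e:ℝ)+1)^e) * ((E * 2^e)^k * k.factorial)
      ≤ ((D * E^e * ((e:ℝ)+1)^e) * (E * 2^e))^k * k.factorial := by
    have hs : D * E^e * ((e:ℝ)+1)^e ≤ (D * E^e * ((e:ℝ)+1)^e)^k :=
      le_self_pow₀ hb (by omega)
    calc (D * E^e * ((e:ℝ)+1)^e) * ((E * 2^e)^k * k.factorial)
        = (D * E^e * ((e:ℝ)+1)^e) * (E * 2^e)^k * k.factorial := by ring
      _ ≤ (D * E^e * ((e:ℝ)+1)^e)^k * (E * 2^e)^k * k.factorial := by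
          exact mul_le_mul_of_nonneg_right (mul_le_mul_of_nonneg_right hs (by positivity))
            (by positivity)
      _ = ((D * E^e * ((e:ℝ)+1)^e) * (E * 2^e))^k * k.factorial := by rw [← mul_pow]
  linarith


lemma inv_coeff_bound (u : PowerSeries ℂ) (hu : constantCoeff u ≠ 0)
    {M A : ℝ} (hM : 1 ≤ M) (hA : 1 ≤ A)
    (hcoef : ∀ n : ℕ, 1 ≤ n → ‖coeff n u‖ ≤ M * A^n * n.factorial) :
    ∃ D E : ℝ, 1 ≤ D ∧ 1 ≤ E ∧ ∀ n : ℕ, ‖coeff n u⁻¹‖ ≤ D * E^n * n.factorial := by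
  set c : ℝ := ‖(constantCoeff u)⁻¹‖ with hc
  have hc0 : 0 ≤ c := norm_nonneg _
  have hM0 : (0:ℝ) ≤ M := by linarith
  set D : ℝ := max 1 c with hD
  set E : ℝ := 2*A*(1 + M*c) with hE
  have hD1 : 1 ≤ D := le_max_left _ _
  have hD0 : 0 ≤ D := by linarith
  have hDc : c ≤ D := le_max_right _ _
  have hA0 : (0:ℝ) < A := by linarith
  have hE2A : 2*A ≤ E := by rw [hE]; nlinarith [mul_nonneg (mul_nonneg hM0 hc0) (le_of_lt hA0)]
  have hE1 : 1 ≤ E := by rw [hE]; nlinarith [mul_nonneg (mul_nonneg hM0 hc0) (le_of_lt hA0)]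
  have hE0 : (0:ℝ) < E := by linarith
  have hEcMA : 2*c*M*A ≤ E := by rw [hE]; nlinarith [mul_nonneg hM0 hc0]
  have hAE : A/E ≤ 1/2 := by
    rw [div_le_div_iff₀ hE0 two_pos]; linarith
  have hAE0 : 0 ≤ A/E := div_nonneg (le_of_lt hA0) (le_of_lt hE0)
  refine ⟨D, E, hD1, hE1, ?_⟩
  intro n
  induction n using Nat.strong_induction_on with
  | _ n ih =>
    rw [PowerSeries.coeff_inv]
    by_cases hn : n = 0
    · subst hn
      rw [if_pos rfl]
      simp only [pow_zero, Nat.factorial_zero, Nat.cast_one, mul_one]; exact hDc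
    · rw [if_neg hn]
      have hn1 : 1 ≤ n := Nat.one_le_iff_ne_zero.mpr hn
      rw [Finset.Nat.sum_antidiagonal_eq_sum_range_succ_mk, norm_mul, norm_neg]
      set Q : ℝ := M * D * n.factorial * E^n * (A/E) with hQ
      have hQ0 : 0 ≤ Q := by positivity
      set b : ℕ → ℝ := fun i => if i = 0 then 0 else Q * (1/2)^(i-1) with hb
      have hterm : ∀ i ∈ Finset.range (n+1),
          ‖if (i, n-i).2 < n then coeff (i, n-i).1 u * coeff (i, n-i).2 u⁻¹ else 0‖
            ≤ b i := by
        intro i hi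
        have hiln : i ≤ n := by
          simp only [Finset.mem_range] at hi; omega
        by_cases hi0 : i = 0
        · subst hi0
          simp [hb]
        · have hi1 : 1 ≤ i := Nat.one_le_iff_ne_zero.mpr hi0
          have hlt : n - i < n := Nat.sub_lt (by omega) (by omega)
          rw [if_pos hlt]
          simp only [hb, if_neg hi0]
          rw [norm_mul]
          have h1 : ‖coeff i u‖ ≤ M * A^i * i.factorial := hcoef i hi1
          have h2 : ‖coeff (n-i) u⁻¹‖ ≤ D * E^(n-i) * (n-i).factorial := ih (n-i) hlt
          have h3 : ‖coeff i u‖ * ‖coeff (n-i) u⁻¹‖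
              ≤ (M * A^i * i.factorial) * (D * E^(n-i) * (n-i).factorial) :=
            mul_le_mul h1 h2 (norm_nonneg _) (by positivity)
          refine le_trans h3 ?_
          have e1 : (i.factorial:ℝ) * (n-i).factorial ≤ n.factorial := by
            have := Nat.factorial_mul_factorial_dvd_factorial_add i (n-i)
            rw [Nat.add_sub_cancel' hiln] at this
            exact_mod_cast Nat.le_of_dvd n.factorial_pos this
          have e2 : A^i * E^(n-i) ≤ E^n * ((A/E) * (1/2)^(i-1)) := by
            have hAi : A^i = (A/E)^i * E^i := by
              rw [← mul_pow, div_mul_cancel₀ _ (ne_of_gt hE0)]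
            rw [hAi, mul_assoc, ← pow_add, Nat.add_sub_cancel' hiln]
            rw [show i = (i-1)+1 by omega, pow_succ]
            have : (A/E)^(i-1) ≤ (1/2:ℝ)^(i-1) := pow_le_pow_left₀ hAE0 hAE (i-1)
            calc (A/E)^(i-1) * (A/E) * E^n ≤ (1/2:ℝ)^(i-1) * (A/E) * E^n := by
                  exact mul_le_mul_of_nonneg_right (mul_le_mul_of_nonneg_right this hAE0)
                    (by positivity)
              _ = E^n * ((A/E) * (1/2)^(i-1)) := by ring
          calc (M * A^i * i.factorial) * (D * E^(n-i) * (n-i).factorial)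
              = (M * D) * (((i.factorial:ℝ) * (n-i).factorial) * (A^i * E^(n-i))) := by ring
            _ ≤ (M * D) * ((n.factorial:ℝ) * (E^n * ((A/E) * (1/2)^(i-1)))) := by
                refine mul_le_mul_of_nonneg_left ?_ (by positivity)
                exact mul_le_mul e1 e2 (by positivity) (by positivity)
            _ = Q * (1/2)^(i-1) := by rw [hQ]; ring
      have hsum : ‖∑ i ∈ Finset.range (n+1),
          if (i, n-i).2 < n then coeff (i, n-i).1 u * coeff (i, n-i).2 u⁻¹ else 0‖
            ≤ ∑ i ∈ Finset.range (n+1), b i :=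
        norm_sum_le_of_le _ hterm
      have hbsum : ∑ i ∈ Finset.range (n+1), b i ≤ Q * 2 := by
        rw [Finset.sum_range_succ']
        simp only [hb, if_neg (Nat.succ_ne_zero _), if_pos rfl, Nat.add_sub_cancel, add_zero]
        rw [← Finset.mul_sum]
        exact mul_le_mul_of_nonneg_left (sum_geometric_two_le n) hQ0
      calc c * ‖∑ i ∈ Finset.range (n+1),
            if (i, n-i).2 < n then coeff (i, n-i).1 u * coeff (i, n-i).2 u⁻¹ else 0‖
          ≤ c * (Q * 2) := by
            refine mul_le_mul_of_nonneg_left (le_trans hsum hbsum) hc0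
        _ ≤ D * E^n * n.factorial := by
            rw [hQ]
            have key : c * (M * D * ↑n.factorial * E ^ n * (A / E) * 2) 
                = (2*c*M*A/E) * (D * E^n * n.factorial) := by
              field_simp
            rw [key]
            have : 2*c*M*A/E ≤ 1 := by
              rw [div_le_one hE0]; exact hEcMA
            nlinarith [mul_pos (mul_pos (lt_of_lt_of_le one_pos hD1) (pow_pos hE0 n))
              ((Nat.cast_pos (α:=ℝ)).2 n.factorial_pos)]


lemma key_inv (d : ℤ) (u : PowerSeries ℂ) (huc : PowerSeries.constantCoeff u ≠ 0) :
    ((HahnSeries.single d 1 : LaurentSeries ℂ) * HahnSeries.ofPowerSeries ℤ ℂ u)⁻¹ =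
      (HahnSeries.single (-d) 1 : LaurentSeries ℂ) * HahnSeries.ofPowerSeries ℤ ℂ u⁻¹ := by
  refine inv_eq_of_mul_eq_one_right ?_
  calc (HahnSeries.single d 1 : LaurentSeries ℂ) * HahnSeries.ofPowerSeries ℤ ℂ u *
        ((HahnSeries.single (-d) 1 : LaurentSeries ℂ) * HahnSeries.ofPowerSeries ℤ ℂ u⁻¹)
      = ((HahnSeries.single d 1 : LaurentSeries ℂ) * HahnSeries.single (-d) 1) *
        (HahnSeries.ofPowerSeries ℤ ℂ u * HahnSeries.ofPowerSeries ℤ ℂ u⁻¹) := by ring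
    _ = 1 := by
        rw [HahnSeries.single_mul_single, ← map_mul, PowerSeries.mul_inv_cancel _ huc]
        simp

lemma finv_eq (f : LaurentSeries ℂ) (huc : PowerSeries.constantCoeff f.powerSeriesPart ≠ 0) :
    f⁻¹ = (HahnSeries.single (-f.order) 1 : LaurentSeries ℂ) *
      HahnSeries.ofPowerSeries ℤ ℂ (f.powerSeriesPart)⁻¹ := by
  conv_lhs => rw [← f.single_order_mul_powerSeriesPart]
  exact key_inv f.order f.powerSeriesPart huc

lemma coeff_single_neg_mul (w : LaurentSeries ℂ) (d k : ℤ) :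
    ((HahnSeries.single (-d) 1 : LaurentSeries ℂ) * w).coeff k = w.coeff (k + d) := by
  conv_lhs => rw [show k = (k + d) + -d by ring]
  rw [HahnSeries.coeff_single_mul_add, one_mul]

lemma coeff_of_neg (v : PowerSeries ℂ) (m : ℤ) (hm : m < 0) :
    (HahnSeries.ofPowerSeries ℤ ℂ v).coeff m = 0 := by
  rw [HahnSeries.ofPowerSeries_apply, HahnSeries.embDomain_of_notMem_range]
  rintro ⟨n, hn⟩
  simp only [Nat.castOrderEmbedding_apply] at hn
  omega

lemma coeff_of_nonneg (v : PowerSeries ℂ) (m : ℤ) (hm : 0 ≤ m) :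
    (HahnSeries.ofPowerSeries ℤ ℂ v).coeff m = PowerSeries.coeff m.toNat v := by
  conv_lhs => rw [show m = ((m.toNat : ℕ) : ℤ) by omega]
  exact HahnSeries.ofPowerSeries_apply_coeff _ _


/-- the set
`K = {f ∈ ℂ((t)) : ∃ C > 0, |coeff_k f| ≤ C^k·k! for all k ≥ 1}` is closed under
taking inverses in the field `ℂ((t))`; hence `K` is a subfield (this is the field
`𝐤 = 𝒲_pt` of Definition 7.3 of the paper, under the substitution `τ = t⁻¹`). -/
theorem stmt_8 (f : LaurentSeries ℂ) (hf : f ≠ 0)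
    (h : ∃ C : ℝ, 0 < C ∧ ∀ k : ℤ, 1 ≤ k →
      ‖f.coeff k‖ ≤ C ^ k.toNat * (k.toNat).factorial) :
    ∃ C : ℝ, 0 < C ∧ ∀ k : ℤ, 1 ≤ k →
      ‖(f⁻¹).coeff k‖ ≤ C ^ k.toNat * (k.toNat).factorial := by
  obtain ⟨C, hC, hcf⟩ := h
  set d : ℤ := f.order with hd
  set e : ℕ := d.toNat with he
  set u : PowerSeries ℂ := f.powerSeriesPart with hu
  have huc : PowerSeries.constantCoeff u ≠ 0 := by
    rw [hu, ← PowerSeries.coeff_zero_eq_constantCoeff_apply,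
      LaurentSeries.powerSeriesPart_coeff]
    simpa using (HahnSeries.coeff_order_eq_zero.not.mpr hf)
  -- Step 1: bound the coefficients of u
  set Cm : ℝ := max C 1 with hCmdef
  have hCm1 : (1:ℝ) ≤ Cm := le_max_right _ _
  obtain ⟨C₁, hC₁pos, hC₁⟩ := shift_bound le_rfl hCm1 e
  set B0 : ℝ := ∑ i ∈ Finset.range ((-d).toNat + 1), ‖f.coeff (d + (i:ℤ))‖ with hB0
  have hB0nn : 0 ≤ B0 := Finset.sum_nonneg fun i _ => norm_nonneg _
  set M : ℝ := B0 + 1 with hM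
  set A : ℝ := max C₁ 1 with hA
  have hM1 : (1:ℝ) ≤ M := by rw [hM]; linarith
  have hA1 : (1:ℝ) ≤ A := le_max_right _ _
  have hbnd : ∀ n : ℕ, 1 ≤ n → ‖PowerSeries.coeff n u‖ ≤ M * A^n * n.factorial := by
    intro n hn
    rw [hu, LaurentSeries.powerSeriesPart_coeff, ← hd]
    have hAnf : (1:ℝ) ≤ A^n * n.factorial := by
      have h1 : (1:ℝ) ≤ A^n := one_le_pow₀ hA1
      have h2 : (1:ℝ) ≤ (n.factorial:ℝ) := by exact_mod_cast n.factorial_pos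
      nlinarith
    by_cases hcase : 1 ≤ d + n
    · have hkb := hcf (d + n) hcase
      have hmn : (d + (n:ℤ)).toNat ≤ n + e := by omega
      have hstep := hC₁ (d + (n:ℤ)).toNat n hn hmn
      rw [one_mul] at hstep
      calc ‖f.coeff (d+(n:ℤ))‖
          ≤ C^(d+(n:ℤ)).toNat * (d+(n:ℤ)).toNat.factorial := hkb
        _ ≤ Cm^(d+(n:ℤ)).toNat * (d+(n:ℤ)).toNat.factorial := by
            exact mul_le_mul_of_nonneg_right
              (pow_le_pow_left₀ (le_of_lt hC) (le_max_left _ _) _) (by positivity)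
        _ ≤ C₁^n * n.factorial := hstep
        _ ≤ A^n * n.factorial := by
            exact mul_le_mul_of_nonneg_right
              (pow_le_pow_left₀ (le_of_lt hC₁pos) (le_max_left _ _) n) (by positivity)
        _ ≤ M * A^n * n.factorial := by
            have : (0:ℝ) ≤ A^n * n.factorial := by positivity
            nlinarith
    · have hmem : n ∈ Finset.range ((-d).toNat + 1) := by
        simp only [Finset.mem_range]; omega
      have hle : ‖f.coeff (d + (n:ℤ))‖ ≤ B0 := by
        rw [hB0]
        exact Finset.single_le_sum (f := fun i : ℕ => ‖f.coeff (d + (i:ℤ))‖) (fun i _ => norm_nonneg _) hmem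
      calc ‖f.coeff (d+(n:ℤ))‖ ≤ B0 := hle
        _ ≤ M := by rw [hM]; linarith
        _ = M * 1 := by ring
        _ ≤ M * (A^n * n.factorial) := by
            exact mul_le_mul_of_nonneg_left hAnf (by linarith)
        _ = M * A^n * n.factorial := by ring
  -- Step 2: bound the coefficients of u⁻¹
  obtain ⟨D, E, hD1, hE1, hv⟩ := inv_coeff_bound u huc hM1 hA1 hbnd
  -- Step 3: transfer back to f⁻¹
  obtain ⟨C₂, hC₂pos, hC₂⟩ := shift_bound hD1 hE1 e
  refine ⟨C₂, hC₂pos, ?_⟩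
  intro k hk
  have hfinv := finv_eq f huc
  rw [← hd, ← hu] at hfinv
  have hco : (f⁻¹).coeff k = (HahnSeries.ofPowerSeries ℤ ℂ u⁻¹).coeff (k + d) := by
    rw [hfinv, coeff_single_neg_mul]
  by_cases hkd : 0 ≤ k + d
  · have hco2 : (f⁻¹).coeff k = PowerSeries.coeff (k+d).toNat u⁻¹ := by
      rw [hco, coeff_of_nonneg _ _ hkd]
    rw [hco2]
    have hb := hv (k+d).toNat
    have hfin := hC₂ (k+d).toNat k.toNat (by omega) (by omega)
    exact le_trans hb hfin
  · rw [hco, coeff_of_neg _ _ (by omega)]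
    simp only [norm_zero]
    positivity
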